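/- Let l ≥ w > 0 and let N_c ≥ 1 be an integer. Then for every configuration y = (x, θ) ∈ ℝ² × ℝ, the oriented rectangular footprint is covered by the multi-circle cover: S(y; l, w) ⊆ BC(y; l, w, N_c), where the N_c closed balls have the common radius r = √((l/(2N_c))² + w²/4) and are placed equidistantly along the rectangle's central longitudinal axis with spacing d_c = 2√(r² − w²/4). -/

import Mathlib

open Real Set

/-- Euclidean norm on `ℝ × ℝ`. -/
noncomputable def enorm2 (p : ℝ × ℝ) : ℝ := Real.sqrt (p.1 ^ 2 + p.2 ^ 2)

/-- Closed Euclidean ball in `ℝ × ℝ` with center `c` and radius `r`. -/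
noncomputable def cball (c : ℝ × ℝ) (r : ℝ) : Set (ℝ × ℝ) := {p | enorm2 (p - c) ≤ r}

/-- Unit heading vector `u(θ) = (cos θ, sin θ)`. -/
noncomputable def uvec (θ : ℝ) : ℝ × ℝ := (Real.cos θ, Real.sin θ)

/-- Rotation of a point of `ℝ × ℝ` by angle `θ` about the origin. -/
noncomputable def rot2 (θ : ℝ) (p : ℝ × ℝ) : ℝ × ℝ :=
  (Real.cos θ * p.1 - Real.sin θ * p.2, Real.sin θ * p.1 + Real.cos θ * p.2)

/-- Closed axis-aligned rectangle `[−l/2, l/2] × [−w/2, w/2]`. -/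
def Rect (l w : ℝ) : Set (ℝ × ℝ) := Set.Icc (-(l / 2)) (l / 2) ×ˢ Set.Icc (-(w / 2)) (w / 2)

/-- Oriented footprint: image of `Rect l w` under rotation by `θ` followed by translation by `x`. -/
noncomputable def footprint (x : ℝ × ℝ) (θ l w : ℝ) : Set (ℝ × ℝ) :=
  (fun p => x + rot2 θ p) '' Rect l w

/-- Common radius of the multi-circle cover. -/
noncomputable def circRadius (l w : ℝ) (Nc : ℕ) : ℝ :=
  Real.sqrt ((l / (2 * Nc)) ^ 2 + w ^ 2 / 4)

/-- Spacing of the circle centers of the multi-circle cover. -/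
noncomputable def circSpacing (l w : ℝ) (Nc : ℕ) : ℝ :=
  2 * Real.sqrt (circRadius l w Nc ^ 2 - w ^ 2 / 4)

/-- Multi-circle cover of the footprint with configuration `(x, θ)`:
`N_c` closed balls of radius `circRadius` centered at `x + L_i • u(θ)` with
`L_i = (2i − N_c − 1) d_c / 2`, `i = 1, …, N_c`. -/
noncomputable def multiCircle (x : ℝ × ℝ) (θ l w : ℝ) (Nc : ℕ) : Set (ℝ × ℝ) :=
  ⋃ i ∈ Finset.Icc 1 Nc,
    cball (x + ((2 * (i : ℝ) - Nc - 1) * circSpacing l w Nc / 2) • uvec θ)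
      (circRadius l w Nc)

lemma exists_center (l : ℝ) (hl : 0 < l) (Nc : ℕ) (hNc : 1 ≤ Nc) (a : ℝ)
    (ha : -(l / 2) ≤ a) (ha' : a ≤ l / 2) :
    ∃ i ∈ Finset.Icc 1 Nc,
      |a - (2 * (i : ℝ) - Nc - 1) * (l / Nc) / 2| ≤ l / (2 * Nc) := by
  have hN : (0 : ℝ) < Nc := by exact_mod_cast Nat.pos_of_ne_zero (by omega)
  set t : ℝ := (a + l / 2) * Nc / l with ht
  have ht0 : 0 ≤ t := by
    apply div_nonneg _ hl.le
    nlinarith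
  have htN : t ≤ Nc := by
    rw [div_le_iff₀ hl]
    nlinarith
  have hln : 0 < l / Nc := div_pos hl hN
  have hal : a + l / 2 = t * (l / Nc) := by
    field_simp [ht]
    have h' : l * t = (a + l / 2) * Nc := by
      rw [ht, mul_div_assoc', mul_comm l, mul_div_assoc, div_self hl.ne', mul_one]
    linear_combination -2 * h'
  have hNl : (Nc : ℝ) * (l / Nc) = l := by field_simp
  have hhalf : l / (2 * Nc) = (l / Nc) / 2 := by ring
  refine ⟨min Nc (⌊t⌋₊ + 1), ?_, ?_⟩
  · simp [Finset.mem_Icc]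
    omega
  · have hfl : (⌊t⌋₊ : ℝ) ≤ t := Nat.floor_le ht0
    have hfu : t < ⌊t⌋₊ + 1 := Nat.lt_floor_add_one t
    have h1 := mul_le_mul_of_nonneg_right hfl hln.le
    have h2 := mul_le_mul_of_nonneg_right hfu.le hln.le
    rcases le_or_gt (⌊t⌋₊ + 1) Nc with h | h
    · rw [min_eq_right h]
      push_cast
      rw [abs_le]
      constructor <;> nlinarith [h1, h2, hal, hNl, hhalf]
    · have hge : (Nc : ℝ) ≤ t := by
        have : Nc ≤ ⌊t⌋₊ := by omega
        have := Nat.le_floor_iff ht0 |>.mp this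
        exact_mod_cast this
      have h3 := mul_le_mul_of_nonneg_right hge hln.le
      rw [min_eq_left (by omega)]
      rw [abs_le]
      constructor <;> nlinarith [h3, hal, hNl, hhalf, ha']
  
/-- For every configuration `(x, θ)`, the oriented rectangular footprint is covered by its
multi-circle cover. -/
theorem footprint_subset_multiCircle
    (l w : ℝ) (hw : 0 < w) (hlw : w ≤ l) (Nc : ℕ) (hNc : 1 ≤ Nc)
    (x : ℝ × ℝ) (θ : ℝ) :
    footprint x θ l w ⊆ multiCircle x θ l w Nc := by
  have hl : 0 < l := lt_of_lt_of_le hw hlw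
  have hN : (0 : ℝ) < Nc := by exact_mod_cast Nat.pos_of_ne_zero (by omega)
  have hrad : circRadius l w Nc ^ 2 = (l / (2 * Nc)) ^ 2 + w ^ 2 / 4 := by
    unfold circRadius
    rw [Real.sq_sqrt (by positivity)]
  have hspacing : circSpacing l w Nc = l / Nc := by
    unfold circSpacing
    rw [hrad]
    have : (l / (2 * Nc)) ^ 2 + w ^ 2 / 4 - w ^ 2 / 4 = (l / (2 * Nc)) ^ 2 := by ring
    rw [this, Real.sqrt_sq (by positivity)]
    field_simp
  rintro q ⟨p, hp, rfl⟩
  obtain ⟨hp1, hp2⟩ := hp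
  simp only [Set.mem_Icc] at hp1 hp2
  obtain ⟨i, hi, habs⟩ := exists_center l hl Nc hNc p.1 hp1.1 hp1.2
  refine Set.mem_biUnion hi ?_
  set L : ℝ := (2 * (i : ℝ) - Nc - 1) * circSpacing l w Nc / 2 with hL
  have hL' : L = (2 * (i : ℝ) - Nc - 1) * (l / Nc) / 2 := by rw [hL, hspacing]
  simp only [cball, Set.mem_setOf_eq]
  have hdiff : x + rot2 θ p - (x + L • uvec θ) =
      (Real.cos θ * (p.1 - L) - Real.sin θ * p.2,
       Real.sin θ * (p.1 - L) + Real.cos θ * p.2) := by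
    simp [rot2, uvec, Prod.ext_iff]
    constructor <;> ring
  rw [hdiff]
  have hnorm : enorm2 (Real.cos θ * (p.1 - L) - Real.sin θ * p.2,
      Real.sin θ * (p.1 - L) + Real.cos θ * p.2) =
      Real.sqrt ((p.1 - L) ^ 2 + p.2 ^ 2) := by
    unfold enorm2
    congr 1
    have h := Real.sin_sq_add_cos_sq θ
    simp only
    nlinarith [h]
  rw [hnorm]
  unfold circRadius
  apply Real.sqrt_le_sqrt
  have h1 : (p.1 - L) ^ 2 ≤ (l / (2 * Nc)) ^ 2 := by
    have : |p.1 - L| ≤ l / (2 * Nc) := by rw [hL']; exact habs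
    nlinarith [abs_nonneg (p.1 - L), sq_abs (p.1 - L), this]
  have h2 : p.2 ^ 2 ≤ w ^ 2 / 4 := by nlinarith [hp2.1, hp2.2]
  linarith
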